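/- Let 𝒳 be a finite set of cardinality k > 1 and d > 1 finite. Let P be a probability measure on 𝒳^d with λ_ℰ(P) > 0, let I ⊆ {1,…,d} be non-empty, and suppose λ_ℰ(P) = λ_ℰ(P_I). If Q is the unique exchangeable probability measure on 𝒳^d with P ≥ λ_ℰ(P)·Q, then the unique exchangeable probability measure Q̃ on 𝒳^{|I|} with P_I ≥ λ_ℰ(P_I)·Q̃ equals the marginal Q_I; in particular, the exchangeable component of P_I is d-extendible. -/

import Mathlib

open scoped BigOperators Classical

/-- A function `P : Ω → ℝ` on a finite sample space is a probability measure if it is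
nonnegative and sums to one. -/
def IsProb {Ω : Type*} [Fintype Ω] (P : Ω → ℝ) : Prop :=
  (∀ ω, 0 ≤ P ω) ∧ ∑ ω, P ω = 1

/-- A probability measure on `𝒳^ι` is exchangeable if it is invariant under all
coordinate permutations. -/
def Exchangeable {ι 𝒳 : Type*} (Q : (ι → 𝒳) → ℝ) : Prop :=
  ∀ σ : Equiv.Perm ι, ∀ x : ι → 𝒳, Q (x ∘ σ) = Q x

/-- The exchangeable weight `λ_ℰ(P)`: the supremum of `λ` such that `P ≥ λ·Q` pointwise
for some exchangeable probability measure `Q`. -/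
noncomputable def exchWeight {ι 𝒳 : Type*} [Fintype ι] [Fintype 𝒳]
    (P : (ι → 𝒳) → ℝ) : ℝ :=
  sSup {l : ℝ | ∃ Q : (ι → 𝒳) → ℝ, IsProb Q ∧ Exchangeable Q ∧ ∀ x, l * Q x ≤ P x}

/-- The permutation-equivalence class `[x]` of `x`, as a set. -/
def permSet {ι 𝒳 : Type*} (x : ι → 𝒳) : Set (ι → 𝒳) :=
  {y | ∃ σ : Equiv.Perm ι, y = x ∘ σ}

/-- The permutation-equivalence class `[x]` of `x`, as a finset. -/
noncomputable def permClass {ι 𝒳 : Type*} [Fintype ι] (x : ι → 𝒳) :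
    Finset (ι → 𝒳) :=
  Finset.univ.image (fun σ : Equiv.Perm ι => x ∘ σ)


/-- The marginal distribution `P_I` of the coordinates indexed by `I`, a probability
measure on `𝒳^{|I|}` (with index type the elements of `I`). -/
noncomputable def marginal {𝒳 : Type*} [Fintype 𝒳] {d : ℕ}
    (P : (Fin d → 𝒳) → ℝ) (I : Finset (Fin d)) : (({ i // i ∈ I }) → 𝒳) → ℝ :=
  fun y => ∑ x : Fin d → 𝒳, if (∀ i : { i // i ∈ I }, x i.1 = y i) then P x else 0

lemma isProb_inst {Ω : Type*} {F G : Fintype Ω} {P : Ω → ℝ}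
    (h : @IsProb Ω F P) : @IsProb Ω G P := by
  cases Subsingleton.elim F G
  exact h

lemma permClass_nonempty {ι 𝒳 : Type*} [Fintype ι] (x : ι → 𝒳) :
    (permClass x).Nonempty :=
  ⟨x, Finset.mem_image.2 ⟨1, Finset.mem_univ _, rfl⟩⟩

noncomputable def orbMin {ι 𝒳 : Type*} [Fintype ι] (P : (ι → 𝒳) → ℝ) (x : ι → 𝒳) : ℝ :=
  (permClass x).inf' (permClass_nonempty x) P

lemma permClass_comp {ι 𝒳 : Type*} [Fintype ι] (x : ι → 𝒳) (σ : Equiv.Perm ι) :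
    permClass (x ∘ σ) = permClass x := by
  ext y
  simp only [permClass, Finset.mem_image, Finset.mem_univ, true_and]
  constructor
  · rintro ⟨τ, rfl⟩
    exact ⟨σ * τ, rfl⟩
  · rintro ⟨ρ, rfl⟩
    refine ⟨σ⁻¹ * ρ, ?_⟩
    ext i
    simp

lemma orbMin_comp {ι 𝒳 : Type*} [Fintype ι] (P : (ι → 𝒳) → ℝ) (x : ι → 𝒳)
    (σ : Equiv.Perm ι) : orbMin P (x ∘ σ) = orbMin P x := by
  unfold orbMin
  congr 1
  exact permClass_comp x σ

lemma orbMin_le {ι 𝒳 : Type*} [Fintype ι] (P : (ι → 𝒳) → ℝ) (x : ι → 𝒳) :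
    orbMin P x ≤ P x :=
  Finset.inf'_le _ (Finset.mem_image.2 ⟨1, Finset.mem_univ _, rfl⟩)

lemma orbMin_nonneg {ι 𝒳 : Type*} [Fintype ι] {P : (ι → 𝒳) → ℝ}
    (h : ∀ x, 0 ≤ P x) (x : ι → 𝒳) : 0 ≤ orbMin P x := by
  apply Finset.le_inf'
  intro b _
  exact h b

lemma feasible_le_orbMin {ι 𝒳 : Type*} [Fintype ι] [Fintype 𝒳]
    {P Q : (ι → 𝒳) → ℝ} {l : ℝ} (hQe : Exchangeable Q)
    (hle : ∀ x, l * Q x ≤ P x) (x : ι → 𝒳) : l * Q x ≤ orbMin P x := by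
  apply Finset.le_inf'
  intro b hb
  obtain ⟨σ, -, rfl⟩ := Finset.mem_image.1 hb
  rw [← hQe σ x]
  exact hle _

lemma feasible_le_sum' {ι 𝒳 : Type*} [Fintype ι] [Fintype 𝒳]
    {G : Fintype (ι → 𝒳)} [F : Fintype (ι → 𝒳)]
    {P Q : (ι → 𝒳) → ℝ} {l : ℝ} (hQp : @IsProb _ G Q) (hQe : Exchangeable Q)
    (hle : ∀ x, l * Q x ≤ P x) : l ≤ ∑ x, orbMin P x := by
  have hQp' : @IsProb _ F Q := isProb_inst hQp
  calc l = l * ∑ x, Q x := by rw [hQp'.2, mul_one]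
    _ = ∑ x, l * Q x := by rw [Finset.mul_sum]
    _ ≤ ∑ x, orbMin P x :=
      Finset.sum_le_sum fun x _ => feasible_le_orbMin hQe hle x

lemma exchWeight_eq_sum {ι 𝒳 : Type*} [Fintype ι] [Fintype 𝒳]
    [F : Fintype (ι → 𝒳)] {P : (ι → 𝒳) → ℝ} (hP : IsProb P) (hpos : 0 < exchWeight P) :
    exchWeight P = ∑ x, orbMin P x := by
  have hP' : @IsProb _ F P := isProb_inst hP
  have hS0 : 0 ≤ ∑ x, orbMin P x :=
    Finset.sum_nonneg fun x _ => orbMin_nonneg hP'.1 x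
  have hub : exchWeight P ≤ ∑ x, orbMin P x := by
    refine Real.sSup_le ?_ hS0
    rintro l ⟨Q, hQp, hQe, hle⟩
    exact feasible_le_sum' hQp hQe hle
  have hSpos : 0 < ∑ x, orbMin P x := lt_of_lt_of_le hpos hub
  set S := ∑ x, orbMin P x with hS
  refine le_antisymm hub ?_
  apply le_csSup ⟨S, ?_⟩ ?_
  · rintro l ⟨Q, hQp, hQe, hle⟩
    exact feasible_le_sum' hQp hQe hle
  · refine ⟨fun x => orbMin P x / S, isProb_inst (F := F)
      ⟨fun x => div_nonneg (orbMin_nonneg hP'.1 x) hS0, ?_⟩,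
      fun σ x => by show orbMin P (x ∘ ⇑σ) / S = orbMin P x / S; rw [orbMin_comp],
      fun x => ?_⟩
    · rw [← Finset.sum_div, div_self hSpos.ne']
    · rw [mul_div_cancel₀ _ hSpos.ne']
      exact orbMin_le P x

lemma exch_component_unique {ι 𝒳 : Type*} [Fintype ι] [Fintype 𝒳]
    [F : Fintype (ι → 𝒳)] {P : (ι → 𝒳) → ℝ} (hP : IsProb P) (hpos : 0 < exchWeight P)
    {Q : (ι → 𝒳) → ℝ} (hQp : IsProb Q) (hQe : Exchangeable Q)
    (hle : ∀ x, exchWeight P * Q x ≤ P x) :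
    ∀ x, Q x = orbMin P x / exchWeight P := by
  have hW := exchWeight_eq_sum hP hpos
  have h1 : ∀ x, exchWeight P * Q x ≤ orbMin P x :=
    fun x => feasible_le_orbMin hQe hle x
  have hsum : ∑ x, (orbMin P x - exchWeight P * Q x) = 0 := by
    rw [Finset.sum_sub_distrib, ← Finset.mul_sum, hQp.2, mul_one, ← hW, sub_self]
  have hzero := (Finset.sum_eq_zero_iff_of_nonneg
    (fun x _ => sub_nonneg.2 (h1 x))).1 hsum
  intro x
  have := hzero x (Finset.mem_univ x)
  have hx : exchWeight P * Q x = orbMin P x := by linarith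
  field_simp [← hx, hpos.ne']
  linarith [hx]

lemma marginal_sum_eq {𝒳 : Type*} [Fintype 𝒳] {d : ℕ}
    (P : (Fin d → 𝒳) → ℝ) (I : Finset (Fin d))
    [F : Fintype (({ i // i ∈ I }) → 𝒳)] :
    ∑ y : ({ i // i ∈ I }) → 𝒳, marginal P I y = ∑ x, P x := by
  unfold marginal
  rw [Finset.sum_comm]
  refine Finset.sum_congr rfl fun x _ => ?_
  have h1 : ∀ y : ({ i // i ∈ I }) → 𝒳,
      (∀ i : { i // i ∈ I }, x i.1 = y i) ↔ (fun i : { i // i ∈ I } => x i.1) = y :=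
    fun y => funext_iff.symm
  simp_rw [h1]
  simp

lemma marginal_isProb {𝒳 : Type*} [Fintype 𝒳] {d : ℕ}
    {P : (Fin d → 𝒳) → ℝ} (hP : IsProb P) (I : Finset (Fin d))
    [F : Fintype (({ i // i ∈ I }) → 𝒳)] :
    IsProb (marginal P I) := by
  constructor
  · intro y
    apply Finset.sum_nonneg
    intro x _
    split
    · exact hP.1 x
    · exact le_refl 0
  · rw [marginal_sum_eq, hP.2]

lemma marginal_exchangeable {𝒳 : Type*} [Fintype 𝒳] {d : ℕ}
    {Q : (Fin d → 𝒳) → ℝ} (hQe : Exchangeable Q) (I : Finset (Fin d)) :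
    Exchangeable (marginal Q I) := by
  have key : ∀ (σ : Equiv.Perm { i // i ∈ I }) (y : ({ i // i ∈ I }) → 𝒳),
      marginal Q I y = marginal Q I (y ∘ ⇑σ⁻¹) := by
    intro σ y
    set τ : Equiv.Perm (Fin d) := σ.extendDomain (Equiv.refl { i // i ∈ I }) with hτdef
    have hτ : ∀ i : { i // i ∈ I }, τ i.1 = (σ i).1 := by
      intro i
      have h := Equiv.Perm.extendDomain_apply_subtype σ (Equiv.refl { i // i ∈ I }) i.2
      simpa using h
    unfold marginal
    have e : (Fin d → 𝒳) ≃ (Fin d → 𝒳) := Equiv.arrowCongr τ.symm (Equiv.refl 𝒳)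
    rw [← Equiv.sum_comp (Equiv.arrowCongr τ.symm (Equiv.refl 𝒳))
        (fun x => if (∀ i : { i // i ∈ I }, x i.1 = y i) then Q x else 0)]
    refine Finset.sum_congr rfl fun x _ => ?_
    have hx : (Equiv.arrowCongr τ.symm (Equiv.refl 𝒳)) x = x ∘ ⇑τ := by
      ext j; simp [Equiv.arrowCongr]
    rw [hx, hQe τ x]
    congr 1
    apply propext
    constructor
    · intro h j
      have h2 := h (σ⁻¹ j)
      simp only [Function.comp_apply] at h2 ⊢
      rw [hτ (σ⁻¹ j)] at h2
      simpa using h2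
    · intro h i
      have h2 := h (σ i)
      simp only [Function.comp_apply] at h2 ⊢
      rw [hτ i]
      simpa using h2
  intro σ y
  have := key σ⁻¹ y
  rw [inv_inv] at this
  exact this.symm

set_option maxHeartbeats 1000000 in
/-- Corollary: if `λ_ℰ(P) = λ_ℰ(P_I) > 0`, then the exchangeable component of `P_I`
equals the marginal `Q_I` of the exchangeable component `Q` of `P`; in particular it is
`d`-extendible (it is the `I`-marginal of an exchangeable probability measure on `𝒳^d`). -/
theorem stmt10 {𝒳 : Type*} [Fintype 𝒳] (hk : 1 < Fintype.card 𝒳)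
    {d : ℕ} (hd : 1 < d) (P : (Fin d → 𝒳) → ℝ) (hP : IsProb P)
    (hpos : 0 < exchWeight P)
    (I : Finset (Fin d)) (hI : I.Nonempty)
    (heq : exchWeight P = exchWeight (marginal P I))
    (Q : (Fin d → 𝒳) → ℝ)
    (hQ : IsProb Q ∧ Exchangeable Q ∧ ∀ x, exchWeight P * Q x ≤ P x)
    (Qt : (({ i // i ∈ I }) → 𝒳) → ℝ)
    (hQt : IsProb Qt ∧ Exchangeable Qt ∧
      ∀ y, exchWeight (marginal P I) * Qt y ≤ marginal P I y) :
    Qt = marginal Q I ∧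
    ∃ ν : (Fin d → 𝒳) → ℝ, IsProb ν ∧ Exchangeable ν ∧ Qt = marginal ν I := by
  have hPI : IsProb (marginal P I) := marginal_isProb hP I
  have hpos' : 0 < exchWeight (marginal P I) := heq ▸ hpos
  -- uniqueness applied to Qt
  have hQt_eq := exch_component_unique hPI hpos' hQt.1 hQt.2.1 hQt.2.2
  -- marginal Q I is also a feasible exchangeable component
  have hMp : IsProb (marginal Q I) := marginal_isProb hQ.1 I
  have hMe : Exchangeable (marginal Q I) := marginal_exchangeable hQ.2.1 I
  have hMle : ∀ y, exchWeight (marginal P I) * marginal Q I y ≤ marginal P I y := by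
    intro y
    set W := exchWeight (marginal P I) with hW
    have hWle : ∀ x, W * Q x ≤ P x := fun x => by rw [← heq]; exact hQ.2.2 x
    show W * marginal Q I y ≤ marginal P I y
    unfold marginal
    rw [Finset.mul_sum]
    refine Finset.sum_le_sum fun x _ => ?_
    rw [mul_ite, mul_zero]
    split
    · exact hWle x
    · exact le_refl 0
  have hM_eq := exch_component_unique hPI hpos' hMp hMe hMle
  have hmain : Qt = marginal Q I := by
    funext y
    rw [hQt_eq y, hM_eq y]
  exact ⟨hmain, Q, hQ.1, hQ.2.1, hmain⟩
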